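/- Let (α_n) and (β_n) be widely separated sequences of sub-probability measures on ℝ^d, i.e., ∫∫ V(x−y) dα_n(x) dβ_n(y) → 0 for some strictly positive continuous V vanishing at infinity. Then for every k ≥ 2 and every continuous translation-invariant f: (ℝ^d)^k → ℝ vanishing at infinity, the difference ∫ f d(α_n+β_n)^{⊗k} − ∫ f dα_n^{⊗k} − ∫ f dβ_n^{⊗k} tends to 0 as n → ∞. -/

import Mathlib

open MeasureTheory Filter Topology Metric ENNReal

lemma aux_pi_sum_decomp {k : ℕ} {X : Type*} [MeasurableSpace X]
    (μ ν : Fin k → Measure X) [∀ i, IsFiniteMeasure (μ i)] [∀ i, IsFiniteMeasure (ν i)] :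
    Measure.pi (fun i => μ i + ν i)
      = ∑ t : Finset (Fin k), Measure.pi (fun i => if i ∈ t then μ i else ν i) := by
  haveI I : ∀ (t : Finset (Fin k)) (i : Fin k), SigmaFinite (if i ∈ t then μ i else ν i) :=
    fun t i => by split <;> infer_instance
  refine Measure.pi_eq fun s hs => ?_
  rw [Measure.finset_sum_apply]
  simp_rw [Measure.pi_pi, Measure.add_apply]
  rw [Fintype.prod_add (fun i => μ i (s i)) (fun i => ν i (s i))]
  refine Finset.sum_congr rfl fun t _ => ?_
  have h : ∀ i : Fin k, (if i ∈ t then μ i (s i) else ν i (s i))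
      = t.piecewise (fun i => μ i (s i)) (fun i => ν i (s i)) i := fun i => by
    simp [Finset.piecewise]
  calc ∏ i, (if i ∈ t then μ i else ν i) (s i)
      = ∏ i, t.piecewise (fun i => μ i (s i)) (fun i => ν i (s i)) i := by
        refine Finset.prod_congr rfl fun i _ => ?_
        rw [← h i]
        by_cases hi : i ∈ t <;> simp [hi]
    _ = (∏ i ∈ t, μ i (s i)) * ∏ i ∈ tᶜ, ν i (s i) := by
        rw [Finset.prod_piecewise, Finset.univ_inter, Finset.compl_eq_univ_sdiff]

lemma aux_pi_map_pair {k : ℕ} {X : Type*} [MeasurableSpace X]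
    (γ : Fin k → Measure X) [∀ l, IsFiniteMeasure (γ l)] {i j : Fin k} (hij : i ≠ j) :
    (Measure.pi γ).map (fun x => (x i, x j))
      = ((∏ l ∈ (Finset.univ.erase i).erase j, γ l Set.univ) • γ i).prod (γ j) := by
  set c := ∏ l ∈ (Finset.univ.erase i).erase j, γ l Set.univ with hc
  have hcfin : c ≠ ⊤ := (ENNReal.prod_lt_top fun l _ => measure_lt_top _ _).ne
  haveI : IsFiniteMeasure (c • γ i) := (γ i).smul_finite hcfin
  refine (Measure.prod_eq fun s t hs ht => ?_).symm
  rw [Measure.map_apply ((measurable_pi_apply i).prodMk (measurable_pi_apply j)) (hs.prod ht)]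
  have hpre : (fun x : Fin k → X => (x i, x j)) ⁻¹' (s ×ˢ t)
      = Set.pi Set.univ (fun l => if l = i then s else if l = j then t else Set.univ) := by
    ext x
    simp only [Set.mem_preimage, Set.mem_prod, Set.mem_pi, Set.mem_univ, true_implies]
    constructor
    · rintro ⟨h1, h2⟩ l
      split_ifs with h h'
      · subst h; exact h1
      · subst h'; exact h2
      · trivial
    · intro h
      refine ⟨by simpa using h i, ?_⟩
      have := h j
      rw [if_neg (Ne.symm hij), if_pos rfl] at this
      exact this
  rw [hpre, Measure.pi_pi]
  rw [← Finset.mul_prod_erase Finset.univ _ (Finset.mem_univ i),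
    ← Finset.mul_prod_erase _ _ (Finset.mem_erase.mpr ⟨Ne.symm hij, Finset.mem_univ j⟩)]
  have hrest : ∏ l ∈ (Finset.univ.erase i).erase j,
      γ l (if l = i then s else if l = j then t else Set.univ) = c := by
    refine Finset.prod_congr rfl fun l hl => ?_
    obtain ⟨hlj, hli, -⟩ : l ≠ j ∧ l ≠ i ∧ True := by
      have h1 := Finset.mem_erase.mp hl
      have h2 := Finset.mem_erase.mp h1.2
      exact ⟨h1.1, h2.1, trivial⟩
    rw [if_neg hli, if_neg hlj]
  rw [hrest, if_pos rfl, if_neg (Ne.symm hij), if_pos rfl]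
  rw [Measure.smul_apply, smul_eq_mul]
  ring

/-- For widely separated sequences α_n, β_n of sub-probability measures and every
continuous translation-invariant f : (ℝ^d)^k → ℝ vanishing at infinity (k ≥ 2),
∫ f d(α_n+β_n)^{⊗k} − ∫ f dα_n^{⊗k} − ∫ f dβ_n^{⊗k} → 0. -/
theorem stmt9 (d k : ℕ) (hk : 2 ≤ k) (α β : ℕ → Measure (EuclideanSpace ℝ (Fin d)))
    [∀ n, IsFiniteMeasure (α n)] [∀ n, IsFiniteMeasure (β n)]
    (hα : ∀ n, α n Set.univ ≤ 1) (hβ : ∀ n, β n Set.univ ≤ 1)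
    (V : EuclideanSpace ℝ (Fin d) → ℝ) (hVc : Continuous V) (hVpos : ∀ x, 0 < V x)
    (hV0 : Tendsto V (cocompact (EuclideanSpace ℝ (Fin d))) (𝓝 0))
    (hsep : Tendsto (fun n => ∫ x, ∫ y, V (x - y) ∂(β n) ∂(α n)) atTop (𝓝 0))
    (f : (Fin k → EuclideanSpace ℝ (Fin d)) → ℝ) (hfc : Continuous f)
    (hinv : ∀ (x : Fin k → EuclideanSpace ℝ (Fin d)) (y : EuclideanSpace ℝ (Fin d)),
      f (fun i => x i + y) = f x)
    (hvanish : ∀ ε : ℝ, 0 < ε → ∃ M : ℝ, ∀ x : Fin k → EuclideanSpace ℝ (Fin d),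
      (∃ i j, i ≠ j ∧ M ≤ ‖x i - x j‖) → |f x| ≤ ε) :
    Tendsto (fun n =>
        (∫ x, f x ∂(Measure.pi fun _ : Fin k => α n + β n))
          - (∫ x, f x ∂(Measure.pi fun _ : Fin k => α n))
          - (∫ x, f x ∂(Measure.pi fun _ : Fin k => β n))) atTop (𝓝 0) := by
  haveI : Nonempty (Fin k) := ⟨⟨0, by omega⟩⟩
  -- f is bounded
  obtain ⟨C, hC1, hCf⟩ : ∃ C : ℝ, 1 ≤ C ∧ ∀ x, |f x| ≤ C := by
    obtain ⟨M₁, hM₁⟩ := hvanish 1 one_pos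
    set M := max M₁ 0 with hM
    have hK : IsCompact (Set.univ.pi fun _ : Fin k => closedBall (0 : EuclideanSpace ℝ (Fin d)) M) :=
      isCompact_univ_pi fun _ => isCompact_closedBall _ _
    have hKne : (Set.univ.pi fun _ : Fin k => closedBall (0 : EuclideanSpace ℝ (Fin d)) M).Nonempty :=
      ⟨fun _ => 0, fun i _ => mem_closedBall_self (le_max_right _ _)⟩
    obtain ⟨z, hzK, hz⟩ := hK.exists_isMaxOn hKne (hfc.abs.continuousOn)
    refine ⟨max |f z| 1, le_max_right _ _, fun x => ?_⟩
    by_cases hcase : ∃ i j, i ≠ j ∧ M₁ ≤ ‖x i - x j‖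
    · exact le_trans (hM₁ x hcase) (le_max_right _ _)
    · push_neg at hcase
      set i0 : Fin k := ⟨0, by omega⟩
      have hfx : f (fun i => x i + -(x i0)) = f x := hinv x (-(x i0))
      have hmem : (fun i => x i + -(x i0)) ∈
          (Set.univ.pi fun _ : Fin k => closedBall (0 : EuclideanSpace ℝ (Fin d)) M) := by
        intro i _
        dsimp only
        rw [mem_closedBall_zero_iff, ← sub_eq_add_neg]
        by_cases hi : i = i0
        · subst hi; simp only [sub_self, norm_zero]; exact le_max_right _ _
        · exact le_trans (hcase i i0 hi).le (le_max_left _ _)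
      calc |f x| = |f (fun i => x i + -(x i0))| := by rw [hfx]
        _ ≤ |f z| := hz hmem
        _ ≤ max |f z| 1 := le_max_left _ _
  have hC0 : 0 < C := lt_of_lt_of_le one_pos hC1
  -- V is bounded
  obtain ⟨B, hVB⟩ : ∃ B : ℝ, ∀ z : EuclideanSpace ℝ (Fin d), V z ≤ B := by
    have h1 : ∀ᶠ z in cocompact (EuclideanSpace ℝ (Fin d)), V z < 1 := hV0.eventually (gt_mem_nhds one_pos)
    obtain ⟨K₀, hK₀c, hK₀sub⟩ := mem_cocompact.mp h1
    obtain ⟨B₀, hB₀⟩ := (hK₀c.image hVc).bddAbove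
    refine ⟨max B₀ 1, fun z => ?_⟩
    by_cases hz : z ∈ K₀
    · exact le_trans (hB₀ ⟨z, hz, rfl⟩) (le_max_left _ _)
    · exact le_trans (hK₀sub hz).le (le_max_right _ _)
  have hB0 : 0 < B := lt_of_lt_of_le (hVpos 0) (hVB 0)
  -- bounded continuous versions
  let fb : BoundedContinuousFunction (Fin k → EuclideanSpace ℝ (Fin d)) ℝ := BoundedContinuousFunction.ofNormedAddCommGroup f hfc C
    (fun x => by rw [Real.norm_eq_abs]; exact hCf x)
  have hfint : ∀ (μ : Measure (Fin k → EuclideanSpace ℝ (Fin d))) [IsFiniteMeasure μ], Integrable f μ :=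
    fun μ _ => fb.integrable μ
  -- the mixed product measures
  haveI Ifin : ∀ (n : ℕ) (t : Finset (Fin k)) (i : Fin k),
      IsFiniteMeasure (if i ∈ t then α n else β n) := fun n t i => by split <;> infer_instance
  set μt : ℕ → Finset (Fin k) → Measure (Fin k → EuclideanSpace ℝ (Fin d)) :=
    fun n t => Measure.pi (fun i => if i ∈ t then α n else β n) with hμt
  have hdecomp : ∀ n, (∫ x, f x ∂(Measure.pi fun _ : Fin k => α n + β n))
      = ∑ t : Finset (Fin k), ∫ x, f x ∂(μt n t) := by
    intro n
    rw [show (fun _ : Fin k => α n + β n) = (fun i : Fin k => α n + β n) from rfl,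
      aux_pi_sum_decomp (fun _ => α n) (fun _ => β n)]
    exact integral_finset_sum_measure fun t _ => hfint _
  have hμtuniv : ∀ n, μt n Finset.univ = Measure.pi fun _ : Fin k => α n := by
    intro n; simp [hμt]
  have hμtempty : ∀ n, μt n ∅ = Measure.pi fun _ : Fin k => β n := by
    intro n; simp [hμt]
  set U' : Finset (Finset (Fin k)) :=
    ((Finset.univ : Finset (Finset (Fin k))).erase Finset.univ).erase ∅ with hU'
  have hne : (∅ : Finset (Fin k)) ≠ Finset.univ := Finset.univ_nonempty.ne_empty.symm
  have key : ∀ n, (∫ x, f x ∂(Measure.pi fun _ : Fin k => α n + β n))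
          - (∫ x, f x ∂(Measure.pi fun _ : Fin k => α n))
          - (∫ x, f x ∂(Measure.pi fun _ : Fin k => β n))
      = ∑ t ∈ U', ∫ x, f x ∂(μt n t) := by
    intro n
    rw [hdecomp n, ← hμtuniv n, ← hμtempty n]
    have h1 : (∑ t : Finset (Fin k), ∫ x, f x ∂(μt n t))
        = (∫ x, f x ∂(μt n Finset.univ)) +
          ∑ t ∈ (Finset.univ : Finset (Finset (Fin k))).erase Finset.univ,
            ∫ x, f x ∂(μt n t) :=
      (Finset.add_sum_erase _ _ (Finset.mem_univ _)).symm
    have h2 : (∑ t ∈ (Finset.univ : Finset (Finset (Fin k))).erase Finset.univ,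
          ∫ x, f x ∂(μt n t))
        = (∫ x, f x ∂(μt n ∅)) + ∑ t ∈ U', ∫ x, f x ∂(μt n t) :=
      (Finset.add_sum_erase _ _ (Finset.mem_erase.mpr ⟨hne, Finset.mem_univ _⟩)).symm
    rw [h1, h2]; ring
  rw [tendsto_congr key]
  have : Tendsto (fun n => ∑ t ∈ U', ∫ x, f x ∂(μt n t)) atTop (𝓝 (∑ t ∈ U', (0 : ℝ))) := by
    refine tendsto_finset_sum _ fun t ht => ?_
    -- the per-term limit
    have htne : t ≠ ∅ := (Finset.mem_erase.mp ht).1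
    have htnu : t ≠ Finset.univ := (Finset.mem_erase.mp (Finset.mem_erase.mp ht).2).1
    obtain ⟨i, hi⟩ := Finset.nonempty_iff_ne_empty.mpr htne
    obtain ⟨j, hj⟩ : ∃ j, j ∉ t := by
      by_contra h
      push_neg at h
      exact htnu (Finset.eq_univ_iff_forall.mpr h)
    have hij : i ≠ j := fun h => hj (h ▸ hi)
    rw [NormedAddCommGroup.tendsto_nhds_zero]
    intro ε hε
    obtain ⟨M₀, hM₀⟩ := hvanish (ε/2) (by positivity)
    set M := max M₀ 0 with hMdef
    obtain ⟨z, hzb, hzmin⟩ := (isCompact_closedBall (0 : EuclideanSpace ℝ (Fin d)) M).exists_isMinOn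
      ⟨0, mem_closedBall_self (le_max_right _ _)⟩ hVc.continuousOn
    have hVz : 0 < V z := hVpos z
    -- pointwise bound
    have hpt : ∀ x : Fin k → EuclideanSpace ℝ (Fin d), |f x| ≤ ε/2 + (C / V z) * V (x i - x j) := by
      intro x
      rcases le_or_gt M ‖x i - x j‖ with h | h
      · have h1 : |f x| ≤ ε/2 := hM₀ x ⟨i, j, hij, le_trans (le_max_left _ _) h⟩
        have h2 : 0 ≤ (C / V z) * V (x i - x j) :=
          mul_nonneg (div_nonneg hC0.le hVz.le) (hVpos _).le
        linarith
      · have hmem : x i - x j ∈ closedBall (0 : EuclideanSpace ℝ (Fin d)) M := by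
          rw [mem_closedBall_zero_iff]; exact h.le
        have h1 : V z ≤ V (x i - x j) := hzmin hmem
        have h2 : C ≤ (C / V z) * V (x i - x j) := by
          rw [div_mul_eq_mul_div, le_div_iff₀ hVz]
          nlinarith
        have h3 := hCf x
        linarith [hε.le]
    -- integrability helpers
    let Vb : BoundedContinuousFunction (Fin k → EuclideanSpace ℝ (Fin d)) ℝ := BoundedContinuousFunction.ofNormedAddCommGroup
      (fun x => V (x i - x j)) (hVc.comp ((continuous_apply i).sub (continuous_apply j))) B
      (fun x => by rw [Real.norm_eq_abs, abs_of_pos (hVpos _)]; exact hVB _)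
    let gb : BoundedContinuousFunction (EuclideanSpace ℝ (Fin d) × EuclideanSpace ℝ (Fin d)) ℝ := BoundedContinuousFunction.ofNormedAddCommGroup
      (fun p : EuclideanSpace ℝ (Fin d) × EuclideanSpace ℝ (Fin d) => V (p.1 - p.2)) (hVc.comp (continuous_fst.sub continuous_snd)) B
      (fun p => by rw [Real.norm_eq_abs, abs_of_pos (hVpos _)]; exact hVB _)
    set S : ℕ → ℝ := fun n => ∫ x, ∫ y, V (x - y) ∂(β n) ∂(α n) with hS
    have hSnonneg : ∀ n, 0 ≤ S n := fun n =>
      integral_nonneg fun x => integral_nonneg fun y => (hVpos _).le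
    -- the key integral inequality
    have hbound : ∀ n, ‖∫ x, f x ∂(μt n t)‖ ≤ ε/2 + (C / V z) * S n := by
      intro n
      have hVint : Integrable (fun x : Fin k → EuclideanSpace ℝ (Fin d) => V (x i - x j))
          (μt n t) := Vb.integrable _
      set ct : ℝ≥0∞ := ∏ l ∈ (Finset.univ.erase i).erase j,
        (if l ∈ t then α n else β n) Set.univ with hct
      have hctfin : ct ≠ ⊤ := (ENNReal.prod_lt_top fun l _ => measure_lt_top _ _).ne
      have hctle : ct ≤ 1 := by
        refine Finset.prod_le_one (fun l _ => zero_le) (fun l _ => ?_)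
        split
        · exact hα n
        · exact hβ n
      haveI : IsFiniteMeasure (ct • α n) := (α n).smul_finite hctfin
      -- value of the V-marginal
      have hIn : (∫ x, V (x i - x j) ∂(μt n t)) = ct.toReal * S n := by
        have hmeas : Measurable (fun x : Fin k → EuclideanSpace ℝ (Fin d) => (x i, x j)) :=
          (measurable_pi_apply i).prodMk (measurable_pi_apply j)
        have hmap := aux_pi_map_pair (fun l => if l ∈ t then α n else β n) hij
        simp only [hi, hj, if_true, if_false, ite_true, ite_false] at hmap
        have e1 : (∫ x, V (x i - x j) ∂(μt n t))
            = ∫ p, V (p.1 - p.2) ∂((μt n t).map (fun x => (x i, x j))) :=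
          (integral_map hmeas.aemeasurable
            ((hVc.comp (continuous_fst.sub continuous_snd)).aestronglyMeasurable)).symm
        have hgint : Integrable
            (fun p : EuclideanSpace ℝ (Fin d) × EuclideanSpace ℝ (Fin d) => V (p.1 - p.2))
            ((ct • α n).prod (β n)) := gb.integrable _
        rw [e1]
        rw [show μt n t = Measure.pi (fun l => if l ∈ t then α n else β n) from rfl]
        rw [hmap, MeasureTheory.integral_prod _ hgint, integral_smul_measure]
        simp only [hS, smul_eq_mul]
      have step1 : ‖∫ x, f x ∂(μt n t)‖ ≤ ∫ x, |f x| ∂(μt n t) := by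
        rw [Real.norm_eq_abs]
        calc |∫ x, f x ∂(μt n t)| ≤ ∫ x, ‖f x‖ ∂(μt n t) := by
              rw [← Real.norm_eq_abs]; exact norm_integral_le_integral_norm f
          _ = ∫ x, |f x| ∂(μt n t) := by simp [Real.norm_eq_abs]
      have step2 : (∫ x, |f x| ∂(μt n t))
          ≤ ∫ x, (ε/2 + (C / V z) * V (x i - x j)) ∂(μt n t) := by
        refine integral_mono (hfint (μt n t)).abs ?_ hpt
        exact (integrable_const _).add (hVint.const_mul _)
      have hmass : ((μt n t) Set.univ).toReal ≤ 1 := by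
        have h1 : (μt n t) Set.univ ≤ 1 := by
          rw [hμt]
          dsimp only
          rw [Measure.pi_univ]
          refine Finset.prod_le_one (fun l _ => zero_le) (fun l _ => ?_)
          split
          · exact hα n
          · exact hβ n
        calc ((μt n t) Set.univ).toReal ≤ (1 : ℝ≥0∞).toReal :=
              ENNReal.toReal_mono ENNReal.one_ne_top h1
          _ = 1 := ENNReal.toReal_one
      have step3 : (∫ x, (ε/2 + (C / V z) * V (x i - x j)) ∂(μt n t))
          = (((μt n t) Set.univ).toReal) * (ε/2) + (C / V z) * (ct.toReal * S n) := by
        rw [integral_add (integrable_const _) (hVint.const_mul _),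
          integral_const, integral_const_mul, hIn, smul_eq_mul, Measure.real]
      have hctR : ct.toReal ≤ 1 := by
        calc ct.toReal ≤ (1 : ℝ≥0∞).toReal := ENNReal.toReal_mono ENNReal.one_ne_top hctle
          _ = 1 := ENNReal.toReal_one
      have hctR0 : 0 ≤ ct.toReal := ENNReal.toReal_nonneg
      have h4 : ct.toReal * S n ≤ S n := by
        nlinarith [hSnonneg n]
      have h5 : (((μt n t) Set.univ).toReal) * (ε/2) ≤ ε/2 := by
        have h0 : 0 ≤ ((μt n t) Set.univ).toReal := ENNReal.toReal_nonneg
        nlinarith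
      have h6 : 0 ≤ C / V z := div_nonneg hC0.le hVz.le
      calc ‖∫ x, f x ∂(μt n t)‖ ≤ ∫ x, (ε/2 + (C / V z) * V (x i - x j)) ∂(μt n t) :=
            le_trans step1 step2
        _ = (((μt n t) Set.univ).toReal) * (ε/2) + (C / V z) * (ct.toReal * S n) := step3
        _ ≤ ε/2 + (C / V z) * S n := by
            have := mul_le_mul_of_nonneg_left h4 h6
            linarith
    -- conclude
    set δ : ℝ := (ε/2) * (V z / C) with hδdef
    have hδ : 0 < δ := by positivity
    filter_upwards [hsep.eventually (gt_mem_nhds hδ)] with n hn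
    have h7 : (C / V z) * S n < (C / V z) * δ :=
      mul_lt_mul_of_pos_left hn (div_pos hC0 hVz)
    have h8 : (C / V z) * δ = ε/2 := by
      rw [hδdef]; field_simp
    calc ‖∫ x, f x ∂(μt n t)‖ ≤ ε/2 + (C / V z) * S n := hbound n
      _ < ε/2 + ε/2 := by linarith
      _ = ε := by ring
  simpa using this
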